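/- Let n ∈ ℕ and let Z be a Hausdorff topological space with closed subsets X and Y such that X ∪ Y = Z and X ∩ Y = {x₀}. Assume there exist continuous retractions r : Z → X and s : Z → Y (so r is the identity on X and s is the identity on Y) with r(Y) = {x₀} and s(X) = {x₀}. Then w_n(X) ∪ w_n(Y) ⊆ w_n(Z) ⊆ w_n(X) ∪ w_n(Y) ∪ {x₀}, where w_n(X) and w_n(Y) denote the sets of π_n-wild points of the subspaces X and Y respectively, and w_n(Z) denotes the set of π_n-wild points of Z. -/

import Mathlib

open Filter Topology

/-- The unit `n`-sphere in `ℝ^(n+1)`. -/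
abbrev Sph (n : ℕ) : Type :=
  Metric.sphere (0 : EuclideanSpace ℝ (Fin (n + 1))) 1

/-- The basepoint `s₀ = (1,0,…,0)` of the unit `n`-sphere. -/
noncomputable def spherePt (n : ℕ) : Sph n :=
  ⟨EuclideanSpace.single 0 1, by
    simp [mem_sphere_zero_iff_norm, EuclideanSpace.norm_single]⟩

/-- A continuous map `S^n → X` is essential if it is not homotopic to a constant map. -/
def Essential {n : ℕ} {X : Type*} [TopologicalSpace X] (f : C(Sph n, X)) : Prop :=
  ∀ x : X, ¬ f.Homotopic (ContinuousMap.const (Sph n) x)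

/-- `x` is a `π_n`-wild point of `X` if there is a sequence of essential maps
`S^n → X` based at `x` converging to the constant map at `x` in the compact-open
topology. -/
def IsWildPoint (n : ℕ) {X : Type*} [TopologicalSpace X] (x : X) : Prop :=
  ∃ f : ℕ → C(Sph n, X),
    (∀ k, f k (spherePt n) = x) ∧
    (∀ k, Essential (f k)) ∧
    Tendsto f atTop (𝓝 (ContinuousMap.const (Sph n) x))

/-- The `π_n`-wild set of `X`. -/
def wildSet (n : ℕ) (X : Type*) [TopologicalSpace X] : Set X :=
  {x | IsWildPoint n x}

/-- A continuous map is `π_n`-injective if precomposition reflects inessentiality. -/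
def PiNInjective (n : ℕ) {X Y : Type*} [TopologicalSpace X] [TopologicalSpace Y]
    (f : C(X, Y)) : Prop :=
  ∀ g : C(Sph n, X),
    (∃ y : Y, (f.comp g).Homotopic (ContinuousMap.const (Sph n) y)) →
    ∃ x : X, g.Homotopic (ContinuousMap.const (Sph n) x)

/-- `X` is `π_n`-rigid at `x`. -/
def IsRigidAt (n : ℕ) {X : Type*} [TopologicalSpace X] (x : X) : Prop :=
  ∃ f : ℕ → C(Sph n, X),
    (∀ k, f k (spherePt n) = x) ∧
    (∀ k, Essential (f k)) ∧
    Tendsto f atTop (𝓝 (ContinuousMap.const (Sph n) x)) ∧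
    ∀ β : C(unitInterval, X), β 0 = x →
      ∀ H : ℕ → C(Sph n × unitInterval, X),
        (∀ k s, H k (s, 0) = f k s) →
        (∀ k t, H k (spherePt n, t) = β t) →
        Tendsto H atTop (𝓝 (β.comp (ContinuousMap.snd (α := Sph n)))) →
        β 1 = x

/-- Auxiliary: a wild point is carried forward along a map admitting a retraction. -/
lemma isWildPoint_map {A Z : Type*} [TopologicalSpace A] [TopologicalSpace Z]
    (ι : C(A, Z)) (r : C(Z, A)) (hri : ∀ a, r (ι a) = a) {n : ℕ} {x : A}
    (hx : IsWildPoint n x) : IsWildPoint n (ι x) := by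
  obtain ⟨f, hbase, hess, hconv⟩ := hx
  refine ⟨fun k => ι.comp (f k), fun k => by simp [hbase k], ?_, ?_⟩
  · intro k z hcz
    have h2 : (r.comp (ι.comp (f k))).Homotopic (r.comp (ContinuousMap.const _ z)) :=
      ContinuousMap.Homotopic.comp (ContinuousMap.Homotopic.refl r) hcz
    have heq : r.comp (ι.comp (f k)) = f k := by ext a; simp [hri]
    rw [heq, ContinuousMap.comp_const] at h2
    exact hess k (r z) h2
  · have h := ((ContinuousMap.continuous_postcomp ι).tendsto
      (ContinuousMap.const (Sph n) x)).comp hconv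
    simpa [Function.comp_def, ContinuousMap.comp_const] using h

/-- Auxiliary: a wild point of `Z` lying in the interior part of a retract `X`
is a wild point of `X`. -/
lemma isWildPoint_restrict {Z : Type*} [TopologicalSpace Z] {n : ℕ}
    {X : Set Z} {z : Z} (hz : z ∈ X)
    (r : C(Z, ↥X)) (hr : ∀ x : X, r (x : Z) = x)
    {U : Set Z} (hUo : IsOpen U) (hzU : z ∈ U) (hUX : U ⊆ X)
    (hw : IsWildPoint n z) : IsWildPoint n (⟨z, hz⟩ : X) := by
  obtain ⟨f, hbase, hess, hconv⟩ := hw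
  have hopen : IsOpen {g : C(Sph n, Z) | Set.MapsTo (⇑g) Set.univ U} :=
    ContinuousMap.isOpen_setOf_mapsTo isCompact_univ hUo
  have hmem : (ContinuousMap.const (Sph n) z) ∈
      {g : C(Sph n, Z) | Set.MapsTo (⇑g) Set.univ U} := fun a _ => hzU
  have hev : ∀ᶠ k in atTop, Set.MapsTo (⇑(f k)) Set.univ U :=
    hconv.eventually (hopen.mem_nhds hmem)
  obtain ⟨N, hN⟩ := eventually_atTop.mp hev
  refine ⟨fun k => r.comp (f (k + N)), ?_, ?_, ?_⟩
  · intro k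
    simp only [ContinuousMap.comp_apply, hbase]
    exact hr ⟨z, hz⟩
  · intro k c hcz
    have hmemX : ∀ a : Sph n, f (k + N) a ∈ X := fun a =>
      hUX (hN (k + N) (Nat.le_add_left N k) (Set.mem_univ a))
    set ι : C(↥X, Z) := ⟨Subtype.val, continuous_subtype_val⟩ with hι
    have h2 : (ι.comp (r.comp (f (k + N)))).Homotopic
        (ι.comp (ContinuousMap.const _ c)) :=
      ContinuousMap.Homotopic.comp (ContinuousMap.Homotopic.refl ι) hcz
    have heq : ι.comp (r.comp (f (k + N))) = f (k + N) := by
      ext a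
      have := hr ⟨f (k + N) a, hmemX a⟩
      simpa [hι] using congrArg Subtype.val this
    rw [heq, ContinuousMap.comp_const] at h2
    exact hess (k + N) (ι c) h2
  · have h := ((ContinuousMap.continuous_postcomp r).tendsto
      (ContinuousMap.const (Sph n) z)).comp
      ((tendsto_add_atTop_iff_nat N).mpr hconv)
    have hrz : r.comp (ContinuousMap.const (Sph n) z)
        = ContinuousMap.const (Sph n) (⟨z, hz⟩ : X) := by
      rw [ContinuousMap.comp_const, hr ⟨z, hz⟩]
    rw [hrz] at h
    exact h

/-- wild set of a wedge `Z = X ∨ Y`. -/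
theorem stmt4 {Z : Type*} [TopologicalSpace Z] [T2Space Z] (n : ℕ)
    (X Y : Set Z) (x₀ : Z) (hX : IsClosed X) (hY : IsClosed Y)
    (hunion : X ∪ Y = Set.univ) (hinter : X ∩ Y = {x₀})
    (r : C(Z, ↥X)) (hr : ∀ x : X, r (x : Z) = x) (hrY : ∀ y ∈ Y, ((r y : X) : Z) = x₀)
    (s : C(Z, ↥Y)) (hs : ∀ y : Y, s (y : Z) = y) (hsX : ∀ x ∈ X, ((s x : Y) : Z) = x₀) :
    (∀ x : X, IsWildPoint n x → IsWildPoint n (x : Z)) ∧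
    (∀ y : Y, IsWildPoint n y → IsWildPoint n (y : Z)) ∧
    (∀ z : Z, IsWildPoint n z →
      z = x₀ ∨ (∃ h : z ∈ X, IsWildPoint n (⟨z, h⟩ : X)) ∨
        (∃ h : z ∈ Y, IsWildPoint n (⟨z, h⟩ : Y))) := by
  refine ⟨?_, ?_, ?_⟩
  · intro x hx
    have := isWildPoint_map ⟨Subtype.val, continuous_subtype_val⟩ r
      (fun a => hr a) hx
    simpa using this
  · intro y hy
    have := isWildPoint_map ⟨Subtype.val, continuous_subtype_val⟩ s
      (fun a => hs a) hy
    simpa using this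
  · intro z hz
    by_cases hzx : z = x₀
    · exact Or.inl hzx
    have hznot : ¬ (z ∈ X ∧ z ∈ Y) := by
      rintro ⟨h1, h2⟩
      have : z ∈ ({x₀} : Set Z) := hinter ▸ Set.mem_inter h1 h2
      exact hzx this
    have hzXY : z ∈ X ∪ Y := hunion ▸ Set.mem_univ z
    rcases hzXY with hzX | hzY
    · have hzY : z ∉ Y := fun h => hznot ⟨hzX, h⟩
      refine Or.inr (Or.inl ⟨hzX, ?_⟩)
      exact isWildPoint_restrict hzX r hr hY.isOpen_compl hzY
        (fun w hw => (hunion ▸ Set.mem_univ w : w ∈ X ∪ Y).resolve_right hw) hz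
    · have hzX : z ∉ X := fun h => hznot ⟨h, hzY⟩
      refine Or.inr (Or.inr ⟨hzY, ?_⟩)
      exact isWildPoint_restrict hzY s hs hX.isOpen_compl hzX
        (fun w hw => (hunion ▸ Set.mem_univ w : w ∈ X ∪ Y).resolve_left hw) hz
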